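/- Moments of the GLMGA distribution: for all σ > 0, a > 0, b > 0 and every real r > 0 with rσ < 1/2, ∫_0^∞ y^r f_{σ,a,b}(y) dy = (2b)^{-σr} · B(1/2 − rσ, a + rσ) / B(1/2, a). -/

import Mathlib

open MeasureTheory Real Filter Topology

/-- The (real) beta function `B(m,n) = ∫_0^1 t^(m-1) (1-t)^(n-1) dt`. -/
noncomputable def betaFn (m n : ℝ) : ℝ :=
  ∫ t in (0:ℝ)..1, t ^ (m - 1) * (1 - t) ^ (n - 1)

/-- The regularized incomplete beta function `I_{m,n}(v)`. -/
noncomputable def regIncBeta (m n v : ℝ) : ℝ :=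
  (∫ t in (0:ℝ)..v, t ^ (m - 1) * (1 - t) ^ (n - 1)) / betaFn m n

/-- The GLMGA density `f_{σ,a,b}`. -/
noncomputable def glmga (σ a b y : ℝ) : ℝ :=
  (2 * b) ^ a / (σ * betaFn a (1 / 2)) * y ^ (-(1 / (2 * σ) + 1))
    / (y ^ (-1 / σ) + 2 * b) ^ (a + 1 / 2)

lemma betaFn_symm (m n : ℝ) : betaFn m n = betaFn n m := by
  have h := intervalIntegral.integral_comp_sub_left (a := 0) (b := 1)
    (fun t : ℝ => t ^ (n - 1) * (1 - t) ^ (m - 1)) 1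
  simp only [sub_sub_cancel, sub_zero, sub_self] at h
  unfold betaFn
  rw [← h]
  exact intervalIntegral.integral_congr fun x _ => mul_comm _ _

lemma betaFn_integrable_half (m n : ℝ) (hm : 0 < m) (hn : 0 < n) :
    IntervalIntegrable (fun t : ℝ => t ^ (m - 1) * (1 - t) ^ (n - 1)) volume 0 (1/2) := by
  rw [intervalIntegrable_iff_integrableOn_Icc_of_le (by norm_num)]
  apply IntegrableOn.mul_continuousOn ?_ ?_ isCompact_Icc
  · rw [integrableOn_Icc_iff_integrableOn_Ioc]
    have h := intervalIntegral.intervalIntegrable_rpow' (a := 0) (b := 1/2) (r := m - 1)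
      (by linarith)
    rwa [intervalIntegrable_iff_integrableOn_Ioc_of_le (by norm_num)] at h
  · apply ContinuousOn.rpow_const (continuous_const.sub continuous_id).continuousOn
    intro x hx
    left
    simp only [Set.mem_Icc] at hx
    have : (0:ℝ) < 1 - x := by linarith [hx.2]
    exact ne_of_gt this

lemma betaFn_integrable (m n : ℝ) (hm : 0 < m) (hn : 0 < n) :
    IntervalIntegrable (fun t : ℝ => t ^ (m - 1) * (1 - t) ^ (n - 1)) volume 0 1 := by
  have h1 := betaFn_integrable_half m n hm hn
  have h2 : IntervalIntegrable (fun t : ℝ => t ^ (m - 1) * (1 - t) ^ (n - 1)) volume (1/2) 1 := by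
    have h := (betaFn_integrable_half n m hn hm).comp_sub_left 1
    norm_num [sub_sub_cancel] at h
    have heq : (fun t : ℝ => t ^ (m - 1) * (1 - t) ^ (n - 1))
        = fun x : ℝ => (1 - x) ^ (n - 1) * x ^ (m - 1) := by
      funext x; ring
    rw [heq]
    exact h.symm
  exact h1.trans h2

lemma betaFn_pos (m n : ℝ) (hm : 0 < m) (hn : 0 < n) : 0 < betaFn m n := by
  unfold betaFn
  apply intervalIntegral.intervalIntegral_pos_of_pos_on (betaFn_integrable m n hm hn) _
    (by norm_num)
  intro x hx
  exact mul_pos (Real.rpow_pos_of_pos hx.1 _) (Real.rpow_pos_of_pos (by linarith [hx.2]) _)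

/-- moments of the GLMGA distribution. -/
theorem glmga_moment (σ a b r : ℝ) (hσ : 0 < σ) (ha : 0 < a) (hb : 0 < b)
    (hr : 0 < r) (hrσ : r * σ < 1 / 2) :
    ∫ y in Set.Ioi (0:ℝ), y ^ r * glmga σ a b y
      = (2 * b) ^ (-(σ * r)) * betaFn (1 / 2 - r * σ) (a + r * σ) / betaFn (1 / 2) a := by
  have hA : (0:ℝ) < 2 * b := by linarith
  have hB : 0 < betaFn a (1/2) := betaFn_pos a (1/2) ha (by norm_num)
  -- image of the substitution map
  have himg : (fun t : ℝ => (2*b*((1-t)/t)) ^ (-σ)) '' Set.Ioo 0 1 = Set.Ioi (0:ℝ) := by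
    ext y
    simp only [Set.mem_image, Set.mem_Ioo, Set.mem_Ioi]
    constructor
    · rintro ⟨t, ⟨ht0, ht1⟩, rfl⟩
      exact Real.rpow_pos_of_pos (mul_pos hA (div_pos (by linarith) ht0)) _
    · intro hy
      have hY : 0 < y ^ (-1/σ) := Real.rpow_pos_of_pos hy _
      have hD : 0 < y ^ (-1/σ) + 2*b := by linarith
      refine ⟨2*b/(y ^ (-1/σ) + 2*b), ⟨div_pos hA hD, ?_⟩, ?_⟩
      · rw [div_lt_one hD]; linarith
      · have h1 : 2*b*((1 - 2*b/(y ^ (-1/σ) + 2*b))/(2*b/(y ^ (-1/σ) + 2*b))) = y ^ (-1/σ) := by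
          field_simp
          ring
        rw [h1, ← Real.rpow_mul hy.le, show (-1/σ) * (-σ) = 1 by field_simp, Real.rpow_one]
  -- injectivity
  have hinj : Set.InjOn (fun t : ℝ => (2*b*((1-t)/t)) ^ (-σ)) (Set.Ioo 0 1) := by
    apply StrictMonoOn.injOn
    intro t1 h1 t2 h2 hlt
    simp only [Set.mem_Ioo] at h1 h2
    have hu2 : 0 < 2*b*((1-t2)/t2) := mul_pos hA (div_pos (by linarith [h2.2]) h2.1)
    have hult : 2*b*((1-t2)/t2) < 2*b*((1-t1)/t1) := by
      apply mul_lt_mul_of_pos_left _ hA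
      rw [div_lt_div_iff₀ h2.1 h1.1]
      nlinarith [h1.1, h2.2]
    exact Real.rpow_lt_rpow_of_neg hu2 hult (neg_lt_zero.mpr hσ)
  -- derivative
  have hderiv : ∀ t ∈ Set.Ioo (0:ℝ) 1, HasDerivWithinAt (fun t : ℝ => (2*b*((1-t)/t)) ^ (-σ))
      (σ*(2*b)*t^(-(2:ℝ))*(2*b*((1-t)/t))^(-σ-1)) (Set.Ioo 0 1) t := by
    intro t ht
    obtain ⟨ht0, ht1⟩ := ht
    have hU : 0 < 2*b*((1-t)/t) := mul_pos hA (div_pos (by linarith) ht0)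
    have hd : HasDerivAt (fun t : ℝ => 2*b*((1-t)/t)) (2*b*((-1*t - (1-t)*1)/t^2)) t :=
      (((hasDerivAt_id t).const_sub 1).div (hasDerivAt_id t) ht0.ne').const_mul (2*b)
    have h := hd.rpow_const (p := -σ) (Or.inl hU.ne')
    have heq : 2*b*((-1*t - (1-t)*1)/t^2) * (-σ) * (2*b*((1-t)/t)) ^ (-σ - 1)
        = σ*(2*b)*t^(-(2:ℝ))*(2*b*((1-t)/t))^(-σ-1) := by
      have h2 : t ^ (-(2:ℝ)) = (t^2)⁻¹ := by
        rw [show (-(2:ℝ)) = -((2:ℕ):ℝ) by norm_num, Real.rpow_neg ht0.le, Real.rpow_natCast]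
      rw [h2]; field_simp; ring
    exact (heq ▸ h).hasDerivWithinAt
  -- key pointwise identity
  have hkey : Set.EqOn
      (fun t : ℝ => |σ*(2*b)*t^(-(2:ℝ))*(2*b*((1-t)/t))^(-σ-1)| •
        (((2*b*((1-t)/t))^(-σ))^r * glmga σ a b ((2*b*((1-t)/t))^(-σ))))
      (fun t : ℝ => ((2*b) ^ (-(σ*r)) / betaFn a (1/2)) *
        (t ^ (a + r*σ - 1) * (1-t) ^ (1/2 - r*σ - 1)))
      (Set.Ioo 0 1) := by
    intro t ht
    obtain ⟨ht0, ht1⟩ := ht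
    have hS : (0:ℝ) < 1 - t := by linarith
    have hU : (0:ℝ) < 2*b*((1-t)/t) := mul_pos hA (div_pos hS ht0)
    simp only [smul_eq_mul, glmga]
    rw [abs_of_pos (mul_pos (mul_pos (mul_pos hσ hA) (Real.rpow_pos_of_pos ht0 _))
      (Real.rpow_pos_of_pos hU _))]
    have e1 : ((2*b*((1-t)/t)) ^ (-σ)) ^ (-1/σ) = 2*b*((1-t)/t) := by
      rw [← Real.rpow_mul hU.le, show (-σ) * (-1/σ) = 1 by field_simp, Real.rpow_one]
    have e2 : 2*b*((1-t)/t) + 2*b = 2*b/t := by field_simp; ring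
    rw [e1, e2, ← Real.rpow_mul hU.le (-σ) r, ← Real.rpow_mul hU.le (-σ) (-(1/(2*σ)+1)),
      show (-σ)*(-(1/(2*σ)+1)) = 1/2 + σ by field_simp]
    have hdec : ∀ e : ℝ, (2*b*((1-t)/t)) ^ e = (2*b)^e * ((1-t)^e * (t^e)⁻¹) := by
      intro e
      rw [Real.mul_rpow hA.le (div_pos hS ht0).le, Real.div_rpow hS.le ht0.le, div_eq_mul_inv]
    have hdec2 : (2*b/t) ^ (a+1/2) = (2*b)^(a+1/2) * (t^(a+1/2))⁻¹ := by
      rw [Real.div_rpow hA.le ht0.le, div_eq_mul_inv]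
    simp only [hdec, hdec2]
    obtain ⟨x1, hx1⟩ : ∃ x, Real.exp x = 2*b := ⟨_, Real.exp_log hA⟩
    obtain ⟨x2, hx2⟩ : ∃ x, Real.exp x = 1 - t := ⟨_, Real.exp_log hS⟩
    obtain ⟨x3, hx3⟩ : ∃ x, Real.exp x = t := ⟨_, Real.exp_log ht0⟩
    obtain ⟨x4, hx4⟩ : ∃ x, Real.exp x = σ := ⟨_, Real.exp_log hσ⟩
    obtain ⟨x5, hx5⟩ : ∃ x, Real.exp x = betaFn a (1/2) := ⟨_, Real.exp_log hB⟩
    rw [← hx1, ← hx2, ← hx3, ← hx4, ← hx5]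
    simp only [← Real.exp_mul, div_eq_mul_inv, mul_inv, ← Real.exp_neg, ← Real.exp_add]
    rw [Real.exp_eq_exp]
    ring
  have hbeq : (∫ t in Set.Ioo (0:ℝ) 1, t ^ (a + r*σ - 1) * (1-t) ^ (1/2 - r*σ - 1))
      = betaFn (a + r*σ) (1/2 - r*σ) := by
    rw [betaFn, intervalIntegral.integral_of_le (by norm_num : (0:ℝ) ≤ 1),
      MeasureTheory.integral_Ioc_eq_integral_Ioo]
  calc ∫ y in Set.Ioi (0:ℝ), y ^ r * glmga σ a b y
      = ∫ y in (fun t : ℝ => (2*b*((1-t)/t)) ^ (-σ)) '' Set.Ioo 0 1,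
          y ^ r * glmga σ a b y := by rw [himg]
    _ = ∫ t in Set.Ioo (0:ℝ) 1, |σ*(2*b)*t^(-(2:ℝ))*(2*b*((1-t)/t))^(-σ-1)| •
          (((2*b*((1-t)/t))^(-σ))^r * glmga σ a b ((2*b*((1-t)/t))^(-σ))) :=
        MeasureTheory.integral_image_eq_integral_abs_deriv_smul measurableSet_Ioo hderiv hinj _
    _ = ∫ t in Set.Ioo (0:ℝ) 1, ((2*b) ^ (-(σ*r)) / betaFn a (1/2)) *
          (t ^ (a + r*σ - 1) * (1-t) ^ (1/2 - r*σ - 1)) :=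
        MeasureTheory.setIntegral_congr_fun measurableSet_Ioo hkey
    _ = ((2*b) ^ (-(σ*r)) / betaFn a (1/2)) *
          ∫ t in Set.Ioo (0:ℝ) 1, t ^ (a + r*σ - 1) * (1-t) ^ (1/2 - r*σ - 1) :=
        MeasureTheory.integral_const_mul _ _
    _ = ((2*b) ^ (-(σ*r)) / betaFn a (1/2)) * betaFn (a + r*σ) (1/2 - r*σ) := by rw [hbeq]
    _ = (2 * b) ^ (-(σ * r)) * betaFn (1 / 2 - r * σ) (a + r * σ) / betaFn (1 / 2) a := by
        rw [betaFn_symm (a + r*σ) (1/2 - r*σ), betaFn_symm (1/2) a]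
        ring
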